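/- Let X be a compact metric space, let μ be a finite Borel measure on X with full support, let U_0 : X → ℝ be continuous with minimum m = min_X U_0, and let F_β : X → ℝ (β > 0) be continuous functions converging uniformly on X to U_0 as β → ∞. For β > 0, let π_β be the probability measure with density proportional to exp(-β F_β) with respect to μ. Then for every δ > 0, π_β( { x ∈ X : U_0(x) ≥ m + δ } ) → 0 as β → ∞; i.e. the quasi-stationary Gibbs measures associated with the annealed InfoNCE potentials concentrate on neighborhoods of the global minimizer set of the limiting potential. -/

import Mathlib

open Real Filter MeasureTheory

/-- Let `X` be a compact metric space, `μ` a finite Borel measure with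
full support, `U₀ : X → ℝ` continuous with minimum `m`, and `F_β : X → ℝ` (`β > 0`)
continuous potentials converging uniformly to `U₀` as `β → ∞`. Then the Gibbs measures
`π_β` with density proportional to `exp(-β F_β)` with respect to `μ` satisfy
`π_β({x : U₀(x) ≥ m + δ}) → 0` as `β → ∞`, for every `δ > 0`; i.e. the quasi-stationary
Gibbs measures of the annealed potentials concentrate on neighborhoods of the global
minimizer set of the limiting potential. -/
theorem gibbs_concentration_annealed_potential
    (X : Type*) [MetricSpace X] [CompactSpace X] [Nonempty X]
    [MeasurableSpace X] [BorelSpace X]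
    (μ : Measure X) [IsFiniteMeasure μ]
    (hsupp : ∀ U : Set X, IsOpen U → U.Nonempty → 0 < μ U)
    (U₀ : X → ℝ) (hU₀ : Continuous U₀)
    (m : ℝ) (hm : IsLeast (Set.range U₀) m)
    (F : ℝ → X → ℝ) (hF : ∀ β > (0 : ℝ), Continuous (F β))
    (hunif : ∀ ε > (0 : ℝ), ∃ B : ℝ, ∀ β ≥ B, ∀ x, |F β x - U₀ x| ≤ ε) :
    ∀ δ > (0 : ℝ),
      Tendsto (fun β : ℝ =>
          (∫⁻ x in {x | m + δ ≤ U₀ x}, ENNReal.ofReal (Real.exp (-β * F β x)) ∂μ) /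
            ∫⁻ x, ENNReal.ofReal (Real.exp (-β * F β x)) ∂μ)
        atTop (nhds 0) := by
  intro δ hδ
  obtain ⟨B, hB⟩ := hunif (δ / 4) (by positivity)
  obtain ⟨x₀, hx₀⟩ := hm.1
  set V : Set X := U₀ ⁻¹' Set.Iio (m + δ / 4) with hV
  have hVopen : IsOpen V := isOpen_Iio.preimage hU₀
  have hVne : V.Nonempty := ⟨x₀, by simp only [hV, Set.mem_preimage, Set.mem_Iio, hx₀]; linarith⟩
  have hVpos : 0 < μ V := hsupp V hVopen hVne
  have hVfin : μ V ≠ ⊤ := measure_ne_top μ V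
  set C : ENNReal := μ Set.univ / μ V with hC
  have hCfin : C ≠ ⊤ := (ENNReal.div_lt_top (measure_ne_top μ _) hVpos.ne').ne
  -- upper bound function
  have hg : Tendsto (fun β : ℝ => C * ENNReal.ofReal (Real.exp (-(δ / 4) * β)))
      atTop (nhds 0) := by
    have h1 : Tendsto (fun β : ℝ => Real.exp (-(δ / 4) * β)) atTop (nhds 0) := by
      have h2 : Tendsto (fun β : ℝ => -(δ / 4) * β) atTop atBot := by
        apply Tendsto.neg_mul_atTop (by linarith : -(δ / 4) < 0) tendsto_const_nhds
        exact tendsto_id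
      exact Real.tendsto_exp_atBot.comp h2
    have h3 : Tendsto (fun β : ℝ => ENNReal.ofReal (Real.exp (-(δ / 4) * β)))
        atTop (nhds 0) := by
      simpa using (ENNReal.tendsto_ofReal h1)
    simpa using ENNReal.Tendsto.const_mul h3 (Or.inr hCfin)
  apply tendsto_of_tendsto_of_tendsto_of_le_of_le' tendsto_const_nhds hg
  · exact Eventually.of_forall fun _ => zero_le
  · filter_upwards [eventually_ge_atTop (max B 1)] with β hβ
    have hβB : B ≤ β := le_trans (le_max_left _ _) hβ
    have hβ1 : (1 : ℝ) ≤ β := le_trans (le_max_right _ _) hβ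
    have hβpos : (0 : ℝ) < β := lt_of_lt_of_le one_pos hβ1
    have hFc : Continuous (F β) := hF β hβpos
    have hmeas : Measurable fun x => ENNReal.ofReal (Real.exp (-β * F β x)) :=
      (ENNReal.continuous_ofReal.comp
        (Real.continuous_exp.comp (continuous_const.mul hFc))).measurable
    set Num := ∫⁻ x in {x | m + δ ≤ U₀ x}, ENNReal.ofReal (Real.exp (-β * F β x)) ∂μ with hNum
    set Den := ∫⁻ x, ENNReal.ofReal (Real.exp (-β * F β x)) ∂μ with hDen
    -- numerator bound
    have hNumle : Num ≤ ENNReal.ofReal (Real.exp (-β * (m + 3 * δ / 4))) * μ Set.univ := by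
      have hstep : Num ≤ ∫⁻ _x in {x | m + δ ≤ U₀ x},
          ENNReal.ofReal (Real.exp (-β * (m + 3 * δ / 4))) ∂μ := by
        refine setLIntegral_mono measurable_const fun x hx => ?_
        apply ENNReal.ofReal_le_ofReal
        apply Real.exp_le_exp.mpr
        have h1 : |F β x - U₀ x| ≤ δ / 4 := hB β hβB x
        have h2 : m + δ ≤ U₀ x := hx
        have h3 : m + 3 * δ / 4 ≤ F β x := by
          have := abs_le.mp h1
          linarith [this.1]
        nlinarith
      calc Num ≤ _ := hstep
        _ = ENNReal.ofReal (Real.exp (-β * (m + 3 * δ / 4))) * μ {x | m + δ ≤ U₀ x} := by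
            rw [setLIntegral_const]
        _ ≤ ENNReal.ofReal (Real.exp (-β * (m + 3 * δ / 4))) * μ Set.univ := by
            exact mul_le_mul' le_rfl (measure_mono (Set.subset_univ _))
    -- denominator bound
    have hDenge : ENNReal.ofReal (Real.exp (-β * (m + δ / 2))) * μ V ≤ Den := by
      have hstep : ∫⁻ _x in V, ENNReal.ofReal (Real.exp (-β * (m + δ / 2))) ∂μ ≤
          ∫⁻ x in V, ENNReal.ofReal (Real.exp (-β * F β x)) ∂μ := by
        refine setLIntegral_mono hmeas fun x hx => ?_
        apply ENNReal.ofReal_le_ofReal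
        apply Real.exp_le_exp.mpr
        have h1 : |F β x - U₀ x| ≤ δ / 4 := hB β hβB x
        have h2 : U₀ x < m + δ / 4 := hx
        have h3 : F β x ≤ m + δ / 2 := by
          have := abs_le.mp h1
          linarith [this.2]
        nlinarith
      calc ENNReal.ofReal (Real.exp (-β * (m + δ / 2))) * μ V
          = ∫⁻ _x in V, ENNReal.ofReal (Real.exp (-β * (m + δ / 2))) ∂μ := by
            rw [setLIntegral_const]
        _ ≤ ∫⁻ x in V, ENNReal.ofReal (Real.exp (-β * F β x)) ∂μ := hstep
        _ ≤ Den := setLIntegral_le_lintegral _ _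
    -- conclude
    apply ENNReal.div_le_of_le_mul
    calc Num ≤ ENNReal.ofReal (Real.exp (-β * (m + 3 * δ / 4))) * μ Set.univ := hNumle
      _ = C * ENNReal.ofReal (Real.exp (-(δ / 4) * β)) *
          (ENNReal.ofReal (Real.exp (-β * (m + δ / 2))) * μ V) := by
          have he : ENNReal.ofReal (Real.exp (-(δ / 4) * β)) *
              ENNReal.ofReal (Real.exp (-β * (m + δ / 2))) =
              ENNReal.ofReal (Real.exp (-β * (m + 3 * δ / 4))) := by
            rw [← ENNReal.ofReal_mul (Real.exp_nonneg _), ← Real.exp_add]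
            ring_nf
          rw [hC, ← he, mul_comm (ENNReal.ofReal (Real.exp (-β * (m + δ / 2)))) (μ V),
            mul_mul_mul_comm, ENNReal.div_mul_cancel hVpos.ne' hVfin]
          ring
      _ ≤ C * ENNReal.ofReal (Real.exp (-(δ / 4) * β)) * Den :=
          mul_le_mul' le_rfl hDenge
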